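/- Let G be a simple graph, C a longest cycle in G with a fixed orientation, H a component of G − V(C), and let u, v be distinct vertices of C each having a neighbor in H such that the union of their neighborhoods in H has at least 2 vertices. Then none of the edges u⁺²v⁺, u⁺v⁺², u⁻²v⁻, u⁻v⁻² lies in E(G); in particular u⁺² ≠ v and u⁻² ≠ v⁻. -/

import Mathlib

open SimpleGraph

def IsCycleEmb {V : Type*} (G : SimpleGraph V) (n : ℕ) (f : ZMod n → V) : Prop :=
  3 ≤ n ∧ Function.Injective f ∧ ∀ i : ZMod n, G.Adj (f i) (f (i + 1))

def IsLongestCycle {V : Type*} (G : SimpleGraph V) (n : ℕ) (f : ZMod n → V) : Prop :=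
  IsCycleEmb G n f ∧ ∀ (m : ℕ) (g : ZMod m → V), IsCycleEmb G m g → m ≤ n

def IsDominatingCycle {V : Type*} (G : SimpleGraph V) (n : ℕ) (f : ZMod n → V) : Prop :=
  IsCycleEmb G n f ∧ ∀ a b : V, G.Adj a b → a ∈ Set.range f ∨ b ∈ Set.range f

def IsCompOutside {V : Type*} (G : SimpleGraph V) (C : Set V) (H : Set V) : Prop :=
  H.Nonempty ∧ Disjoint H C ∧ (G.induce H).Connected ∧
    ∀ a ∈ H, ∀ b : V, G.Adj a b → b ∉ C → b ∈ H

def TwoConnected {V : Type*} (G : SimpleGraph V) : Prop :=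
  3 ≤ Nat.card V ∧ ∀ v : V, (G.induce ({v}ᶜ : Set V)).Connected

def KConnected {V : Type*} (G : SimpleGraph V) (k : ℕ) : Prop :=
  k < Nat.card V ∧ ∀ S : Set V, S.ncard < k → (G.induce (Sᶜ : Set V)).Connected

def HFree {W V : Type*} (H : SimpleGraph W) (G : SimpleGraph V) : Prop :=
  ¬ Nonempty (H ↪g G)

def IsCompleteMultipartite {V : Type*} (G : SimpleGraph V) : Prop :=
  ∃ s : Setoid V, ∀ a b : V, G.Adj a b ↔ ¬ s.r a b

/-- `W = K₁ + 3K₂`: vertex 0 joined to three disjoint edges 12, 34, 56. -/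
def Wgraph : SimpleGraph (Fin 7) :=
  SimpleGraph.fromRel (fun a b =>
    a = 0 ∨ (a = 1 ∧ b = 2) ∨ (a = 3 ∧ b = 4) ∨ (a = 5 ∧ b = 6))

/-- `Z₁`, the paw: triangle 012 plus pendant edge 23. -/
def pawGraph : SimpleGraph (Fin 4) :=
  SimpleGraph.fromRel (fun a b =>
    (a = 0 ∧ b = 1) ∨ (a = 1 ∧ b = 2) ∨ (a = 0 ∧ b = 2) ∨ (a = 2 ∧ b = 3))

/-- The claw `K₁,₃`. -/
def clawGraph : SimpleGraph (Fin 4) :=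
  SimpleGraph.fromRel (fun a _ => a = 0)

/-- `K₄` minus the edge 23. -/
def K4minusGraph : SimpleGraph (Fin 4) :=
  SimpleGraph.fromRel (fun a b => ¬((a = 2 ∧ b = 3) ∨ (a = 3 ∧ b = 2)))

/-- `K₁,₃**`: spider with legs of lengths 2, 2, 1 (center 0, legs 0-1-2, 0-3-4, 0-5). -/
def spider221 : SimpleGraph (Fin 6) :=
  SimpleGraph.fromRel (fun a b =>
    (a = 0 ∧ b = 1) ∨ (a = 1 ∧ b = 2) ∨ (a = 0 ∧ b = 3) ∨ (a = 3 ∧ b = 4) ∨ (a = 0 ∧ b = 5))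

/-- The theta graph `A_s`: two vertices joined by three internally disjoint paths,
each with `s` internal vertices. -/
def thetaGraph (s : ℕ) : SimpleGraph (Fin 2 ⊕ Fin 3 × Fin s) :=
  SimpleGraph.fromRel (fun a b =>
    (∃ (j : Fin 3) (k : Fin s), a = Sum.inl 0 ∧ b = Sum.inr (j, k) ∧ (k : ℕ) = 0) ∨
    (∃ (j : Fin 3) (k : Fin s), a = Sum.inl 1 ∧ b = Sum.inr (j, k) ∧ (k : ℕ) = s - 1) ∨
    (∃ (j : Fin 3) (k l : Fin s), a = Sum.inr (j, k) ∧ b = Sum.inr (j, l) ∧ (l : ℕ) = (k : ℕ) + 1))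

/-- `A′_s = 2K₁ + sK₂`. -/
def APrime (s : ℕ) : SimpleGraph (Fin 2 ⊕ Fin s × Fin 2) :=
  SimpleGraph.fromRel (fun a b =>
    (∃ (i : Fin 2) (x : Fin s × Fin 2), a = Sum.inl i ∧ b = Sum.inr x) ∨
    (∃ j : Fin s, a = Sum.inr (j, 0) ∧ b = Sum.inr (j, 1)))

/-- `A″_s = K₂ + (2K₂ ∪ K_s)`. -/
def ADoublePrime (s : ℕ) : SimpleGraph (Fin 2 ⊕ (Fin 2 × Fin 2 ⊕ Fin s)) :=
  SimpleGraph.fromRel (fun a b =>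
    (∃ i : Fin 2, a = Sum.inl i) ∨
    (∃ j : Fin 2, a = Sum.inr (Sum.inl (j, 0)) ∧ b = Sum.inr (Sum.inl (j, 1))) ∨
    (∃ p q : Fin s, a = Sum.inr (Sum.inr p) ∧ b = Sum.inr (Sum.inr q)))

/-- `A_s⁽¹⁾`: two disjoint triangles joined by three vertex-disjoint paths with `s`
internal vertices each. -/
def AOne (s : ℕ) : SimpleGraph (Fin 2 × Fin 3 ⊕ Fin 3 × Fin s) :=
  SimpleGraph.fromRel (fun a b =>
    (∃ (t : Fin 2) (i j : Fin 3), a = Sum.inl (t, i) ∧ b = Sum.inl (t, j)) ∨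
    (∃ (j : Fin 3) (k : Fin s), a = Sum.inl (0, j) ∧ b = Sum.inr (j, k) ∧ (k : ℕ) = 0) ∨
    (∃ (j : Fin 3) (k : Fin s), a = Sum.inl (1, j) ∧ b = Sum.inr (j, k) ∧ (k : ℕ) = s - 1) ∨
    (∃ (j : Fin 3) (k l : Fin s), a = Sum.inr (j, k) ∧ b = Sum.inr (j, l) ∧ (l : ℕ) = (k : ℕ) + 1))

/-- `A_s⁽⁵⁾`: vertices `x₁, x₂` and `y_{i,j}`; edges `x₁x₂`, `y_{1,j}y_{2,j}`, `x_i y_{i,j}`. -/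
def AFive (s : ℕ) : SimpleGraph (Fin 2 ⊕ Fin 2 × Fin s) :=
  SimpleGraph.fromRel (fun a b =>
    (a = Sum.inl 0 ∧ b = Sum.inl 1) ∨
    (∃ j : Fin s, a = Sum.inr (0, j) ∧ b = Sum.inr (1, j)) ∨
    (∃ (i : Fin 2) (j : Fin s), a = Sum.inl i ∧ b = Sum.inr (i, j)))

namespace Stmt2Aux

variable {V : Type*} {G : SimpleGraph V} {n : ℕ}

lemma castZMod_inj {n a b : ℕ} (ha : a < n) (hb : b < n) (h : (a : ZMod n) = b) : a = b := by
  haveI : NeZero n := ⟨by omega⟩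
  rw [← ZMod.val_cast_of_lt ha, ← ZMod.val_cast_of_lt hb, h]

/-- An arc of a cyclic map. -/
def arcL (φ : ZMod n → V) (s : ZMod n) (m : ℕ) : List V :=
  (List.range m).map fun k : ℕ => φ (s + (k : ZMod n))

@[simp] lemma arcL_length (φ : ZMod n → V) (s : ZMod n) (m : ℕ) :
    (arcL φ s m).length = m := by simp [arcL]

lemma arcL_ne_nil (φ : ZMod n → V) (s : ZMod n) {m : ℕ} (hm : 1 ≤ m) :
    arcL φ s m ≠ [] := by
  intro h
  have := congrArg List.length h
  simp [arcL] at this; omega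

lemma arcL_mem {φ : ZMod n → V} {s : ZMod n} {m : ℕ} {x : V} :
    x ∈ arcL φ s m ↔ ∃ k, k < m ∧ φ (s + (k : ZMod n)) = x := by
  simp [arcL, List.mem_map, List.mem_range]

lemma arcL_head? (φ : ZMod n → V) (s : ZMod n) {m : ℕ} (hm : 1 ≤ m) :
    (arcL φ s m).head? = some (φ s) := by
  cases m with
  | zero => omega
  | succ m => simp [arcL, List.range_succ_eq_map]

lemma arcL_getLast? (φ : ZMod n → V) (s : ZMod n) {m : ℕ} (hm : 1 ≤ m) :
    (arcL φ s m).getLast? = some (φ (s + ((m - 1 : ℕ) : ZMod n))) := by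
  rw [List.getLast?_eq_getLast_of_ne_nil (arcL_ne_nil φ s hm)]
  congr 1
  rw [List.getLast_eq_getElem]
  simp only [arcL, List.length_map, List.length_range, List.getElem_map, List.getElem_range]

lemma arcL_chain' {φ : ZMod n → V} (hadj : ∀ t, G.Adj (φ t) (φ (t + 1)))
    (s : ZMod n) (m : ℕ) : (arcL φ s m).Chain' G.Adj := by
  rw [arcL]
  unfold List.Chain'
  rw [List.isChain_map]
  rw [List.isChain_iff_getElem]
  intro k hk
  simp only [List.get_eq_getElem, List.getElem_range]
  have : ((k + 1 : ℕ) : ZMod n) = (k : ZMod n) + 1 := by push_cast; ring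
  rw [this, ← add_assoc]
  exact hadj _

lemma arcL_nodup {φ : ZMod n → V} (hφ : Function.Injective φ) (s : ZMod n)
    {m : ℕ} (hm : m ≤ n) : (arcL φ s m).Nodup := by
  rw [arcL]
  apply List.Nodup.map_on _ (List.nodup_range (n := m))
  intro x hx y hy hxy
  simp only [List.mem_range] at hx hy
  have := hφ hxy
  have h2 : (x : ZMod n) = y := by
    have := add_left_cancel this
    exact this
  exact castZMod_inj (by omega) (by omega) h2

lemma exists_cycleEmb_of_list (G : SimpleGraph V) (L : List V) (h3 : 3 ≤ L.length)
    (hnd : L.Nodup) (hch : L.Chain' G.Adj) (hne : L ≠ [])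
    (hcl : G.Adj (L.getLast hne) (L.head hne)) :
    ∃ g : ZMod L.length → V, IsCycleEmb G L.length g := by
  haveI : NeZero L.length := ⟨by omega⟩
  refine ⟨fun k => L.get ⟨k.val, ZMod.val_lt k⟩, h3, ?_, ?_⟩
  · intro k k' h
    have h2 := List.nodup_iff_injective_get.mp hnd h
    have h3 : k.val = k'.val := congrArg Fin.val h2
    exact ZMod.val_injective _ h3
  · intro k
    have hval : (k + 1).val = (k.val + 1) % L.length := by
      rw [ZMod.val_add]
      congr 1
      have : (1 : ZMod L.length).val = 1 % L.length := ZMod.val_one_eq_one_mod _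
      rw [this, Nat.mod_eq_of_lt (by omega)]
    by_cases hlt : k.val + 1 < L.length
    · have hgoal := List.isChain_iff_getElem.mp hch k.val (by omega)
      have heq : (k + 1).val = k.val + 1 := by rw [hval, Nat.mod_eq_of_lt hlt]
      show G.Adj (L.get ⟨k.val, ZMod.val_lt k⟩) (L.get ⟨(k + 1).val, ZMod.val_lt _⟩)
      convert hgoal using 2
      all_goals simp [heq]
    · have hk : k.val = L.length - 1 := by have := ZMod.val_lt k; omega
      have h0 : (k + 1).val = 0 := by
        rw [hval, hk]
        have : L.length - 1 + 1 = L.length := by omega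
        rw [this, Nat.mod_self]
      have e1 : L.get ⟨k.val, ZMod.val_lt k⟩ = L.getLast hne := by
        rw [List.getLast_eq_getElem]
        simp [hk]
      have e2 : L.get ⟨(k+1).val, ZMod.val_lt _⟩ = L.head hne := by
        simp only [h0, List.get_eq_getElem]
        try exact List.getElem_zero (by omega)
      show G.Adj (L.get ⟨k.val, ZMod.val_lt k⟩) (L.get ⟨(k + 1).val, ZMod.val_lt _⟩)
      rw [e1, e2]
      exact hcl

lemma no_longer {f : ZMod n → V} (hC : IsLongestCycle G n f) (L : List V)
    (hlen : n < L.length) (hnd : L.Nodup) (hch : L.Chain' G.Adj)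
    {x y : V} (hhd : L.head? = some x) (hlast : L.getLast? = some y)
    (hcl : G.Adj y x) : False := by
  have hn3 : 3 ≤ n := hC.1.1
  have hne : L ≠ [] := by intro h; subst h; simp at hlen
  have hx : L.head hne = x := by
    have := List.head?_eq_head hne
    rw [hhd] at this; exact (Option.some_injective _ this).symm
  have hy : L.getLast hne = y := by
    rw [List.getLast?_eq_getLast_of_ne_nil hne] at hlast
    exact Option.some_injective _ hlast
  obtain ⟨g, hg⟩ := exists_cycleEmb_of_list G L (by omega) hnd hch hne
    (by rw [hx, hy]; exact hcl)
  have := hC.2 L.length g hg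
  omega

lemma exists_pathList {C H : Set V} (hH : IsCompOutside G C H) {a b : V}
    (haH : a ∈ H) (hbH : b ∈ H) :
    ∃ P : List V, P ≠ [] ∧ P.Nodup ∧ P.Chain' G.Adj ∧ (∀ x ∈ P, x ∈ H) ∧
      P.head? = some a ∧ P.getLast? = some b ∧ (a ≠ b → 2 ≤ P.length) := by
  classical
  obtain ⟨w⟩ := (hH.2.2.1).preconnected ⟨a, haH⟩ ⟨b, hbH⟩
  set q := w.bypass with hq
  have hqne : q.support.map Subtype.val ≠ [] := by
    intro hcon
    exact q.support_ne_nil (List.map_eq_nil_iff.mp hcon)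
  have hlast : (q.support.map Subtype.val).getLast? = some b := by
    rw [List.getLast?_eq_getLast_of_ne_nil hqne, List.getLast_map]
    simp
  have hhead : (q.support.map Subtype.val).head? = some a := by
    rw [q.support_eq_cons, List.map_cons, List.head?_cons]
  refine ⟨q.support.map Subtype.val, hqne, ?_, ?_, ?_, hhead, hlast, ?_⟩
  · exact (w.bypass_isPath.support_nodup).map Subtype.val_injective
  · have hc := q.isChain_adj_support
    unfold List.Chain'
    rw [List.isChain_map]
    exact hc.imp fun x y h => h
  · intro x hx
    simp only [List.mem_map] at hx
    obtain ⟨⟨y, hy⟩, _, rfl⟩ := hx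
    exact hy
  · intro hab
    by_contra hcon
    push_neg at hcon
    have h1 : 0 < (q.support.map Subtype.val).length := List.length_pos_iff.mpr hqne
    have h2 : (q.support.map Subtype.val).length = 1 := by omega
    obtain ⟨x, hx⟩ := List.length_eq_one_iff.mp h2
    rw [hx] at hhead hlast
    simp at hhead hlast
    exact hab (hhead.symm.trans hlast)


lemma opt_mem_eq {α : Type*} {o : Option α} {x y : α} (h1 : o = some y) (h2 : x ∈ o) :
    x = y := by
  rw [Option.mem_def, h1, Option.some_inj] at h2
  exact h2.symm

lemma keyA {f : ZMod n → V} {H : Set V}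
    (hC : IsLongestCycle G n f) (hH : IsCompOutside G (Set.range f) H)
    {i j : ZMod n} (hij : f i ≠ f j) {a b : V}
    (ha : G.Adj (f i) a) (haH : a ∈ H) (hb : G.Adj (f j) b) (hbH : b ∈ H)
    (hab : a ≠ b) : ¬ G.Adj (f (i + 2)) (f (j + 1)) := by
  have hn3 : 3 ≤ n := hC.1.1
  haveI : NeZero n := ⟨by omega⟩
  have hfinj : Function.Injective f := hC.1.2.1
  have hadj : ∀ t, G.Adj (f t) (f (t + 1)) := hC.1.2.2
  by_cases hji : j = i + 1
  · subst hji
    intro h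
    rw [show i + 1 + 1 = i + 2 by ring] at h
    exact h.ne rfl
  intro hedge
  set d := (j - i).val with hd
  have hdlt : d < n := ZMod.val_lt _
  have hdcast : ((d : ℕ) : ZMod n) = j - i := by
    rw [hd, ZMod.natCast_val, ZMod.cast_id]
  have hd0 : d ≠ 0 := by
    intro h0
    apply hij
    have h1 : j - i = 0 := by rw [← hdcast, h0, Nat.cast_zero]
    have h2 : i = j := by linear_combination -h1
    rw [h2]
  have hd1 : d ≠ 1 := by
    intro h1
    apply hji
    have h2 : j - i = 1 := by rw [← hdcast, h1, Nat.cast_one]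
    linear_combination h2
  have hd2 : 2 ≤ d := by omega
  obtain ⟨P, hPne, hPnd, hPch, hPH, hPh, hPl, hPlen⟩ := exists_pathList hH haH hbH
  have hP2 : 2 ≤ P.length := hPlen hab
  set φ : ZMod n → V := fun t => f (-t) with hφ
  have hφinj : Function.Injective φ := by
    intro x y h
    exact neg_injective (hfinj h)
  have hφadj : ∀ t, G.Adj (φ t) (φ (t + 1)) := by
    intro t
    have h1 := (hadj (-(t + 1))).symm
    have e : -(t + 1) + 1 = -t := by ring
    rw [e] at h1
    exact h1
  set F := arcL f (j + 1) (n - d) with hF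
  set B := arcL φ (-j) (d - 1) with hB
  have hFne : F ≠ [] := arcL_ne_nil _ _ (by omega)
  have hBne : B ≠ [] := arcL_ne_nil _ _ (by omega)
  have hdisjHC : Disjoint H (Set.range f) := hH.2.1
  have hFmem : ∀ x ∈ F, x ∈ Set.range f := by
    intro x hx
    rw [hF, arcL_mem] at hx
    obtain ⟨k, _, hk⟩ := hx
    exact ⟨_, hk⟩
  have hBmem : ∀ x ∈ B, x ∈ Set.range f := by
    intro x hx
    rw [hB, arcL_mem] at hx
    obtain ⟨k, _, hk⟩ := hx
    exact ⟨_, hk⟩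
  have hFhead : F.head? = some (f (j + 1)) := by
    rw [hF, arcL_head? _ _ (by omega)]
  have hBhead : B.head? = some (f j) := by
    rw [hB, arcL_head? _ _ (by omega)]
    congr 1
    show f (-(-j)) = f j
    rw [neg_neg]
  have hFlast : F.getLast? = some (f i) := by
    rw [hF, arcL_getLast? _ _ (by omega)]
    congr 2
    have h2 : ((n - d - 1 : ℕ) : ZMod n) + ((d + 1 : ℕ) : ZMod n) = ((n : ℕ) : ZMod n) := by
      rw [← Nat.cast_add]; congr 1; omega
    rw [ZMod.natCast_self] at h2
    push_cast at h2
    have e1 : ((n - d - 1 : ℕ) : ZMod n) = -(d : ZMod n) - 1 := by linear_combination h2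
    rw [e1, hdcast]
    ring
  have hBlast : B.getLast? = some (f (i + 2)) := by
    rw [hB, arcL_getLast? _ _ (by omega)]
    congr 1
    show f (-(-j + ((d - 1 - 1 : ℕ) : ZMod n))) = f (i + 2)
    congr 1
    have h2 : ((d - 1 - 1 : ℕ) : ZMod n) + ((2 : ℕ) : ZMod n) = ((d : ℕ) : ZMod n) := by
      rw [← Nat.cast_add]; congr 1; omega
    push_cast at h2
    have e1 : ((d - 1 - 1 : ℕ) : ZMod n) = (d : ZMod n) - 2 := by linear_combination h2
    rw [e1, hdcast]
    ring
  set L := F ++ P ++ B with hL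
  have hchain : L.Chain' G.Adj := by
    rw [hL]
    unfold List.Chain'
    rw [List.isChain_append, List.isChain_append]
    refine ⟨⟨arcL_chain' hadj _ _, hPch, ?_⟩, arcL_chain' hφadj _ _, ?_⟩
    · intro x hx y hy
      have hx' := opt_mem_eq hFlast hx
      have hy' := opt_mem_eq hPh hy
      subst hx'; subst hy'
      exact ha
    · intro x hx y hy
      rw [List.getLast?_append_of_ne_nil _ hPne] at hx
      have hx' := opt_mem_eq hPl hx
      have hy' := opt_mem_eq hBhead hy
      subst hx'; subst hy'
      exact hb.symm
  have hFB : ∀ x ∈ F, x ∈ B → False := by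
    intro x hxF hxB
    rw [hF, arcL_mem] at hxF
    rw [hB, arcL_mem] at hxB
    obtain ⟨k₁, hk₁, he₁⟩ := hxF
    obtain ⟨k₂, hk₂, he₂⟩ := hxB
    simp only [hφ] at he₂
    have harg : j + 1 + (k₁ : ZMod n) = -(-j + (k₂ : ZMod n)) :=
      hfinj (he₁.trans he₂.symm)
    have hz : ((k₁ + k₂ + 1 : ℕ) : ZMod n) = ((0 : ℕ) : ZMod n) := by
      push_cast
      linear_combination harg
    have := castZMod_inj (by omega) (by omega) hz
    omega
  have hndL : L.Nodup := by
    rw [hL, List.nodup_append, List.nodup_append]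
    refine ⟨⟨arcL_nodup hfinj _ (by omega), hPnd, ?_⟩, arcL_nodup hφinj _ (by omega), ?_⟩
    · intro x hxF y hxP hxy
      subst hxy
      exact (Set.disjoint_right.mp hdisjHC (hFmem x hxF)) (hPH x hxP)
    · intro x hx y hxB hxy
      subst hxy
      rcases List.mem_append.mp hx with hxF | hxP
      · exact hFB x hxF hxB
      · exact (Set.disjoint_right.mp hdisjHC (hBmem x hxB)) (hPH x hxP)
  have hLhead : L.head? = some (f (j + 1)) := by
    have h1 : F ++ P ≠ [] := by
      intro hcon
      exact hFne (List.append_eq_nil_iff.mp hcon).1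
    rw [hL, List.head?_append_of_ne_nil _ h1, List.head?_append_of_ne_nil _ hFne]
    exact hFhead
  have hLlast : L.getLast? = some (f (i + 2)) := by
    rw [hL, List.getLast?_append_of_ne_nil _ hBne]
    exact hBlast
  have hLlen : n < L.length := by
    have : L.length = (n - d) + (P.length + (d - 1)) := by
      simp [hL, hF, hB]
    omega
  exact no_longer hC L hLlen hndL hchain hLhead hLlast hedge

lemma keyB {f : ZMod n → V} {H : Set V}
    (hC : IsLongestCycle G n f) (hH : IsCompOutside G (Set.range f) H)
    {i j : ZMod n} {a b : V}
    (ha : G.Adj (f i) a) (haH : a ∈ H) (hb : G.Adj (f j) b) (hbH : b ∈ H) :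
    j ≠ i + 1 := by
  intro hji
  subst hji
  have hn3 : 3 ≤ n := hC.1.1
  haveI : NeZero n := ⟨by omega⟩
  have hfinj : Function.Injective f := hC.1.2.1
  have hadj : ∀ t, G.Adj (f t) (f (t + 1)) := hC.1.2.2
  have hdisjHC : Disjoint H (Set.range f) := hH.2.1
  obtain ⟨P, hPne, hPnd, hPch, hPH, hPh, hPl, _⟩ := exists_pathList hH haH hbH
  set F := arcL f (i + 1) n with hF
  have hFne : F ≠ [] := arcL_ne_nil _ _ (by omega)
  have hFlast : F.getLast? = some (f i) := by
    rw [hF, arcL_getLast? _ _ (by omega)]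
    congr 2
    have h2 : ((n - 1 : ℕ) : ZMod n) + ((1 : ℕ) : ZMod n) = ((n : ℕ) : ZMod n) := by
      rw [← Nat.cast_add]; congr 1; omega
    rw [ZMod.natCast_self] at h2
    push_cast at h2
    linear_combination h2
  have hFmem : ∀ x ∈ F, x ∈ Set.range f := by
    intro x hx
    rw [hF, arcL_mem] at hx
    obtain ⟨k, _, hk⟩ := hx
    exact ⟨_, hk⟩
  set L := F ++ P with hL
  have hchain : L.Chain' G.Adj := by
    rw [hL]
    unfold List.Chain'
    rw [List.isChain_append]
    refine ⟨arcL_chain' hadj _ _, hPch, ?_⟩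
    intro x hx y hy
    have hx' := opt_mem_eq hFlast hx
    have hy' := opt_mem_eq hPh hy
    subst hx'; subst hy'
    exact ha
  have hndL : L.Nodup := by
    rw [hL, List.nodup_append]
    refine ⟨arcL_nodup hfinj _ (by omega), hPnd, ?_⟩
    intro x hxF y hxP hxy
    subst hxy
    exact (Set.disjoint_right.mp hdisjHC (hFmem x hxF)) (hPH x hxP)
  have hLhead : L.head? = some (f (i + 1)) := by
    rw [hL, List.head?_append_of_ne_nil]
    · exact arcL_head? _ _ (by omega)
    · exact hFne
  have hLlast : L.getLast? = some b := by
    rw [hL, List.getLast?_append_of_ne_nil _ hPne]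
    exact hPl
  have hLlen : n < L.length := by
    have h1 : 0 < P.length := List.length_pos_iff.mpr hPne
    have : L.length = n + P.length := by simp [hL, hF]
    omega
  exact no_longer hC L hLlen hndL hchain hLhead hLlast hb.symm

lemma rev_longest {f : ZMod n → V} (hC : IsLongestCycle G n f) :
    IsLongestCycle G n (fun k => f (-k)) := by
  obtain ⟨⟨h3, hinj, hadj⟩, hmax⟩ := hC
  refine ⟨⟨h3, ?_, ?_⟩, hmax⟩
  · intro x y h
    exact neg_injective (hinj h)
  · intro k
    have h1 := (hadj (-(k + 1))).symm
    have e : -(k + 1) + 1 = -k := by ring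
    rw [e] at h1
    exact h1

lemma rev_range {f : ZMod n → V} :
    (Set.range fun k : ZMod n => f (-k)) = Set.range f := by
  ext x
  constructor
  · rintro ⟨k, rfl⟩
    exact ⟨-k, rfl⟩
  · rintro ⟨k, rfl⟩
    exact ⟨-k, by simp⟩

end Stmt2Aux

/-- If `u = f i` and `v = f j` are distinct vertices of a longest cycle, each with a
neighbor in a component `H` of `G - V(C)`, and together they have at least two neighbors
in `H`, then none of `u⁺²v⁺`, `u⁺v⁺²`, `u⁻²v⁻`, `u⁻v⁻²` is an edge; in particular
`u⁺² ≠ v` and `u⁻² ≠ v⁻`. -/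


theorem stmt2 {V : Type*} [Fintype V] (G : SimpleGraph V) (n : ℕ) (f : ZMod n → V)
    (H : Set V) (hC : IsLongestCycle G n f) (hH : IsCompOutside G (Set.range f) H)
    (i j : ZMod n) (hij : f i ≠ f j)
    (hu : (G.neighborSet (f i) ∩ H).Nonempty) (hv : (G.neighborSet (f j) ∩ H).Nonempty)
    (h2 : 2 ≤ ((G.neighborSet (f i) ∩ H) ∪ (G.neighborSet (f j) ∩ H)).ncard) :
    ¬ G.Adj (f (i + 2)) (f (j + 1)) ∧ ¬ G.Adj (f (i + 1)) (f (j + 2)) ∧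
    ¬ G.Adj (f (i - 2)) (f (j - 1)) ∧ ¬ G.Adj (f (i - 1)) (f (j - 2)) ∧
    f (i + 2) ≠ f j ∧ f (i - 2) ≠ f (j - 1) := by
  classical
  have hn3 : 3 ≤ n := hC.1.1
  haveI : NeZero n := ⟨by omega⟩
  have hfinj : Function.Injective f := hC.1.2.1
  have hadj : ∀ t, G.Adj (f t) (f (t + 1)) := hC.1.2.2
  obtain ⟨a, b, ha, haH, hb, hbH, hab⟩ :
      ∃ a b, G.Adj (f i) a ∧ a ∈ H ∧ G.Adj (f j) b ∧ b ∈ H ∧ a ≠ b := by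
    obtain ⟨a0, ha0⟩ := hu
    obtain ⟨b0, hb0⟩ := hv
    by_cases hab : a0 = b0
    · subst hab
      have hex : ∃ c ∈ (G.neighborSet (f i) ∩ H) ∪ (G.neighborSet (f j) ∩ H), c ≠ a0 := by
        by_contra hcon
        push_neg at hcon
        have hsub : (G.neighborSet (f i) ∩ H) ∪ (G.neighborSet (f j) ∩ H) ⊆ {a0} := by
          intro c hc
          exact hcon c hc
        have hle := Set.ncard_le_ncard hsub (Set.toFinite _)
        rw [Set.ncard_singleton] at hle
        omega
      obtain ⟨c, hc, hca⟩ := hex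
      rcases hc with hc | hc
      · exact ⟨c, a0, hc.1, hc.2, hb0.1, hb0.2, hca⟩
      · exact ⟨a0, c, ha0.1, ha0.2, hc.1, hc.2, Ne.symm hca⟩
    · exact ⟨a0, b0, ha0.1, ha0.2, hb0.1, hb0.2, hab⟩
  set f' : ZMod n → V := fun k => f (-k) with hf'
  have hC' : IsLongestCycle G n f' := Stmt2Aux.rev_longest hC
  have hH' : IsCompOutside G (Set.range f') H := by
    rw [hf', Stmt2Aux.rev_range]
    exact hH
  have hij' : f' (-i) ≠ f' (-j) := by simpa [hf'] using hij
  have ha' : G.Adj (f' (-i)) a := by simpa [hf'] using ha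
  have hb' : G.Adj (f' (-j)) b := by simpa [hf'] using hb
  have part1 : ¬ G.Adj (f (i + 2)) (f (j + 1)) :=
    Stmt2Aux.keyA hC hH hij ha haH hb hbH hab
  have part2 : ¬ G.Adj (f (i + 1)) (f (j + 2)) := fun h =>
    Stmt2Aux.keyA hC hH hij.symm hb hbH ha haH hab.symm h.symm
  have part3' := Stmt2Aux.keyA hC' hH' hij' ha' haH hb' hbH hab
  have part3 : ¬ G.Adj (f (i - 2)) (f (j - 1)) := by
    intro h
    apply part3'
    show G.Adj (f (-(-i + 2))) (f (-(-j + 1)))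
    rw [show -(-i + 2) = i - 2 from by ring, show -(-j + 1) = j - 1 from by ring]
    exact h
  have part4' := Stmt2Aux.keyA hC' hH' hij'.symm hb' hbH ha' haH hab.symm
  have part4 : ¬ G.Adj (f (i - 1)) (f (j - 2)) := by
    intro h
    apply part4'
    show G.Adj (f (-(-j + 2))) (f (-(-i + 1)))
    rw [show -(-j + 2) = j - 2 from by ring, show -(-i + 1) = i - 1 from by ring]
    exact h.symm
  refine ⟨part1, part2, part3, part4, ?_, ?_⟩
  · intro h
    apply part1
    rw [h]
    exact hadj j
  · intro h
    have h1 : i - 2 = j - 1 := hfinj h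
    have h2' : i = j + 1 := by linear_combination h1
    exact Stmt2Aux.keyB hC hH hb hbH ha haH h2'
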